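/- In any weighted voting game, splitting a player i of weight w_i into two players of weights w' and w_i − w' (keeping all other weights and the quota fixed) yields a game in which the sum of the probabilistic Banzhaf indices of the two new players equals the probabilistic Banzhaf index of the original player i in the original game. -/

import Mathlib

open Finset

/-- The value (1 or 0) of coalition `C` in the weighted voting game with
weights `w` and quota `q`: `C` wins iff its total weight is at least `q`. -/
def wvgVal {ι : Type*} [DecidableEq ι] (w : ι → ℕ) (q : ℕ) (C : Finset ι) : ℚ :=
  if q ≤ ∑ j ∈ C, w j then 1 else 0

/-- Probabilistic Banzhaf index of player `i` in the weighted voting game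
with weights `w` and quota `q`. -/
def banzhaf {ι : Type*} [Fintype ι] [DecidableEq ι] (w : ι → ℕ) (q : ℕ) (i : ι) : ℚ :=
  (1 / 2 ^ (Fintype.card ι - 1)) *
    ∑ C ∈ (Finset.univ.erase i).powerset, (wvgVal w q (insert i C) - wvgVal w q C)

lemma sum_powerset_map' {α β M : Type*} [DecidableEq α] [DecidableEq β] [AddCommMonoid M]
    (f : α ↪ β) (s : Finset α) (g : Finset β → M) :
    ∑ t ∈ (s.map f).powerset, g t = ∑ t ∈ s.powerset, g (t.map f) := by
  have h : (s.map f).powerset = s.powerset.map (Finset.mapEmbedding f).toEmbedding := by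
    ext t
    simp only [mem_powerset, Finset.subset_map_iff, mem_map, RelEmbedding.coe_toEmbedding,
      Finset.mapEmbedding_apply]
    constructor
    · rintro ⟨u, hu, rfl⟩; exact ⟨u, by simpa using hu, rfl⟩
    · rintro ⟨u, hu, rfl⟩; exact ⟨u, by simpa using hu, rfl⟩
  rw [h, Finset.sum_map]
  exact Finset.sum_congr rfl fun t _ => rfl

theorem banzhaf_split_two_sum (n : ℕ) (w : Fin n → ℕ) (q : ℕ)
    (hq : 0 < q) (hq' : q ≤ ∑ j, w j) (i : Fin n) (w' : ℕ) (hw' : w' ≤ w i) :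
    banzhaf (Sum.elim (Function.update w i w') (fun _ : Unit => w i - w') :
          Fin n ⊕ Unit → ℕ) q (Sum.inl i) +
        banzhaf (Sum.elim (Function.update w i w') (fun _ : Unit => w i - w') :
          Fin n ⊕ Unit → ℕ) q (Sum.inr ()) =
      banzhaf w q i := by
  classical
  have hn : 0 < n := i.pos
  set W : Fin n ⊕ Unit → ℕ :=
    Sum.elim (Function.update w i w') (fun _ : Unit => w i - w') with hWdef
  set s : Finset (Fin n) := Finset.univ.erase i with hs
  set emb : Fin n ↪ Fin n ⊕ Unit := Function.Embedding.inl with hemb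
  have hinr : ∀ C : Finset (Fin n), (Sum.inr () : Fin n ⊕ Unit) ∉ C.map emb := by
    intro C; simp [hemb]
  have hinl : ∀ C : Finset (Fin n), i ∉ C → (Sum.inl i : Fin n ⊕ Unit) ∉ C.map emb := by
    intro C hC; simp [hemb, hC]
  have e1 : (Finset.univ : Finset (Fin n ⊕ Unit)).erase (Sum.inl i)
      = insert (Sum.inr ()) (s.map emb) := by
    ext x
    rcases x with a | u
    · by_cases h : a = i <;> simp [hs, hemb, h]
    · simp [hemb]
  have e2 : (Finset.univ : Finset (Fin n ⊕ Unit)).erase (Sum.inr ())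
      = insert (Sum.inl i) (s.map emb) := by
    ext x
    rcases x with a | u
    · by_cases h : a = i <;> simp [hs, hemb, h]
    · simp [hemb]
  have hcard : Fintype.card (Fin n ⊕ Unit) - 1 = n := by simp
  have hsmap : (Sum.inr () : Fin n ⊕ Unit) ∉ s.map emb := hinr s
  have hsmap' : (Sum.inl i : Fin n ⊕ Unit) ∉ s.map emb := hinl s (by simp [hs])
  unfold banzhaf
  rw [hcard, e1, e2, Finset.sum_powerset_insert hsmap, Finset.sum_powerset_insert hsmap',
    Fintype.card_fin, sum_powerset_map', sum_powerset_map', sum_powerset_map',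
    sum_powerset_map']
  rw [← Finset.sum_add_distrib, ← Finset.sum_add_distrib, ← mul_add,
    ← Finset.sum_add_distrib, ← hs]
  have key : ∀ C ∈ s.powerset,
      ((wvgVal W q (insert (Sum.inl i) (C.map emb)) - wvgVal W q (C.map emb) +
        (wvgVal W q (insert (Sum.inl i) (insert (Sum.inr ()) (C.map emb))) -
          wvgVal W q (insert (Sum.inr ()) (C.map emb)))) +
       (wvgVal W q (insert (Sum.inr ()) (C.map emb)) - wvgVal W q (C.map emb) +
        (wvgVal W q (insert (Sum.inr ()) (insert (Sum.inl i) (C.map emb))) -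
          wvgVal W q (insert (Sum.inl i) (C.map emb)))))
      = 2 * (wvgVal w q (insert i C) - wvgVal w q C) := by
    intro C hC
    have hiC : i ∉ C := by
      intro h
      exact (Finset.mem_erase.mp ((Finset.mem_powerset.mp hC) h)).1 rfl
    set s0 : ℕ := ∑ j ∈ C, w j with hs0
    have hm : ∑ j ∈ C.map emb, W j = s0 := by
      rw [Finset.sum_map]
      refine Finset.sum_congr rfl fun j hj => ?_
      have : j ≠ i := fun h => hiC (h ▸ hj)
      rw [hWdef]; simp [hemb, Function.update_of_ne this]
    have hWi : W (Sum.inl i) = w' := by rw [hWdef]; simp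
    have hWr : W (Sum.inr ()) = w i - w' := by rw [hWdef]; simp
    have hA : wvgVal W q (C.map emb) = (if q ≤ s0 then (1 : ℚ) else 0) := by
      rw [wvgVal, hm]
    have hB : wvgVal W q (insert (Sum.inl i) (C.map emb))
        = (if q ≤ w' + s0 then (1 : ℚ) else 0) := by
      rw [wvgVal, Finset.sum_insert (hinl C hiC), hm, hWi]
    have hCc : wvgVal W q (insert (Sum.inr ()) (C.map emb))
        = (if q ≤ (w i - w') + s0 then (1 : ℚ) else 0) := by
      rw [wvgVal, Finset.sum_insert (hinr C), hm, hWr]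
    have hD1 : wvgVal W q (insert (Sum.inl i) (insert (Sum.inr ()) (C.map emb)))
        = (if q ≤ w i + s0 then (1 : ℚ) else 0) := by
      rw [wvgVal, Finset.sum_insert (by simp [hemb, hiC]),
        Finset.sum_insert (hinr C), hm, hWi, hWr]
      congr 1
      have : w' + (w i - w' + s0) = w i + s0 := by omega
      rw [this]
    have hD2 : wvgVal W q (insert (Sum.inr ()) (insert (Sum.inl i) (C.map emb)))
        = (if q ≤ w i + s0 then (1 : ℚ) else 0) := by
      rw [wvgVal, Finset.sum_insert (by simp [hemb]),
        Finset.sum_insert (hinl C hiC), hm, hWi, hWr]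
      congr 1
      have : w i - w' + (w' + s0) = w i + s0 := by omega
      rw [this]
    have hR1 : wvgVal w q (insert i C) = (if q ≤ w i + s0 then (1 : ℚ) else 0) := by
      rw [wvgVal, Finset.sum_insert hiC]
    have hR2 : wvgVal w q C = (if q ≤ s0 then (1 : ℚ) else 0) := by
      rw [wvgVal]
    rw [hA, hB, hCc, hD1, hD2, hR1, hR2]
    ring
  rw [Finset.sum_congr rfl key]
  rw [Finset.mul_sum, Finset.mul_sum]
  refine Finset.sum_congr rfl fun C hC => ?_
  have h2 : (2 : ℚ) ^ n = 2 ^ (n - 1) * 2 := by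
    rw [← pow_succ]
    congr 1
    omega
  field_simp [h2]
  rw [h2]; ring
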